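/- Let n ≥ 4 be an integer, let φ = 400000·n², let r = (n−3)/n, and let i be an integer with 1 ≤ i ≤ n. Then for all reals p₁, …, p_{n+4} ∈ [0, 1/φ], q ∈ [−r^{2i−2}, −r^{2i−2} + 1/φ], s₁, …, s_{2n+6} ∈ [0, 1/φ], q' ∈ [−r^{2i−2}, −r^{2i−2} + 1/φ], and w ∈ [−r^{2i−1}, −r^{2i−1} + 1/φ]: (q + ∑_{j=1}^{n+4} p_j)/(n+5) < (q' + w + ∑_{j=1}^{2n+6} s_j)/(2n+8). In particular (worst case) (−r^{2i−2} + (n+5)/φ)/(n+5) < (−r^{2i−2} − r^{2i−1})/(2n+8). -/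

import Mathlib

lemma aux_pow (n : ℕ) (hn : 4 ≤ n) :
    (1/4096 : ℝ) ≤ (((n:ℝ) - 3)/n) ^ (2*n - 2) := by
  rcases le_or_gt n 8 with h8 | h9
  · interval_cases n <;> norm_num
  · have hn9 : (9:ℝ) ≤ n := by exact_mod_cast h9
    have h3 : (0:ℝ) < (n:ℝ) - 3 := by linarith
    have hnpos : (0:ℝ) < n := by linarith
    set x : ℝ := 3 / ((n:ℝ) - 3) with hx
    have hxpos : 0 < x := by positivity
    have hexp : Real.exp (-x) ≤ ((n:ℝ) - 3)/n := by
      have h1 : 1 + x ≤ Real.exp x := by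
        have := Real.add_one_le_exp x; linarith
      have h2 : 1 + x = (n:ℝ)/((n:ℝ)-3) := by rw [hx]; field_simp; ring
      rw [Real.exp_neg]
      rw [h2] at h1
      have hpos : (0:ℝ) < (n:ℝ)/((n:ℝ)-3) := by positivity
      calc (Real.exp x)⁻¹ ≤ ((n:ℝ)/((n:ℝ)-3))⁻¹ := by
            exact inv_anti₀ hpos h1
        _ = ((n:ℝ)-3)/n := by rw [inv_div]
    have hstep : Real.exp (-x) ^ (2*n-2) ≤ (((n:ℝ)-3)/n) ^ (2*n-2) :=
      pow_le_pow_left₀ (Real.exp_nonneg _) hexp _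
    refine le_trans ?_ hstep
    rw [← Real.exp_nat_mul]
    have hcast : ((2*n-2 : ℕ) : ℝ) = 2*(n:ℝ) - 2 := by
      have h2 : (2 : ℕ) ≤ 2*n := by omega
      push_cast [Nat.cast_sub h2]
      ring
    rw [hcast]
    have hle : (2*(n:ℝ) - 2) * x ≤ 8 := by
      rw [hx, ← mul_div_assoc, div_le_iff₀ h3]
      nlinarith
    have h8' : Real.exp 8 ≤ 4096 := by
      have h1 : Real.exp 8 = (Real.exp 1)^8 := by
        rw [← Real.exp_nat_mul]; norm_num
      rw [h1]
      have he := Real.exp_one_lt_d9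
      calc (Real.exp 1)^8 ≤ (2.7182818286:ℝ)^8 := by
            exact pow_le_pow_left₀ (Real.exp_nonneg 1) he.le 8
        _ ≤ 4096 := by norm_num
    have : Real.exp (-8) ≤ Real.exp ((2*(n:ℝ)-2) * (-x)) := by
      apply Real.exp_le_exp.mpr; nlinarith
    have hlow : (1/4096:ℝ) ≤ Real.exp (-8) := by
      rw [Real.exp_neg, one_div]
      exact inv_anti₀ (Real.exp_pos 8) h8'
    linarith




/-- Lemma 14: in the instance `H` (with `φ = 400000·n²`, `r = (n−3)/n`), the
`(n+5)`-edge cycle `C₁ = (d,wᵢ,a,u,v,d)` has lower mean cost than the `(2n+8)`-edge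
cycle `C₂ = (d,wᵢ,a,u,b,xᵢ,c,v,d)`, for every realization of the edge costs in their
intervals. -/
theorem stmt15 (n : ℕ) (hn : 4 ≤ n) (φ r : ℝ)
    (hφ : φ = 400000 * (n : ℝ) ^ 2) (hr : r = ((n : ℝ) - 3) / n)
    (i : ℕ) (hi1 : 1 ≤ i) (hin : i ≤ n) :
    (∀ (p : Fin (n + 4) → ℝ) (q : ℝ) (s : Fin (2 * n + 6) → ℝ) (q' w : ℝ),
        (∀ j, p j ∈ Set.Icc (0 : ℝ) (1 / φ)) →
        q ∈ Set.Icc (-r ^ (2 * i - 2)) (-r ^ (2 * i - 2) + 1 / φ) →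
        (∀ j, s j ∈ Set.Icc (0 : ℝ) (1 / φ)) →
        q' ∈ Set.Icc (-r ^ (2 * i - 2)) (-r ^ (2 * i - 2) + 1 / φ) →
        w ∈ Set.Icc (-r ^ (2 * i - 1)) (-r ^ (2 * i - 1) + 1 / φ) →
        (q + ∑ j, p j) / ((n : ℝ) + 5) < (q' + w + ∑ j, s j) / (2 * (n : ℝ) + 8))
    ∧ (-r ^ (2 * i - 2) + ((n : ℝ) + 5) / φ) / ((n : ℝ) + 5) <
        (-r ^ (2 * i - 2) - r ^ (2 * i - 1)) / (2 * (n : ℝ) + 8) := by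
  have hn4 : (4:ℝ) ≤ n := by exact_mod_cast hn
  have hnpos : (0:ℝ) < n := by linarith
  have hφpos : (0:ℝ) < φ := by rw [hφ]; positivity
  have hr0 : 0 ≤ r := by rw [hr]; apply div_nonneg <;> linarith
  have hr1 : r ≤ 1 := by rw [hr, div_le_one hnpos]; linarith
  have hA : (1/4096 : ℝ) ≤ r ^ (2*i-2) := by
    refine le_trans (aux_pow n hn) ?_
    rw [← hr]
    exact pow_le_pow_of_le_one hr0 hr1 (by omega)
  have hBA : r ^ (2*i-1) = r ^ (2*i-2) * r := by
    have h : 2*i-1 = (2*i-2)+1 := by omega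
    rw [h, pow_succ]
  set A : ℝ := r ^ (2*i-2) with hAdef
  have key : (-A + ((n:ℝ) + 5) / φ) / ((n:ℝ) + 5) <
      (-A - r ^ (2 * i - 1)) / (2 * (n:ℝ) + 8) := by
    rw [hBA, hr, hφ, div_lt_div_iff₀ (by linarith) (by linarith)]
    rw [← sub_pos]
    have hQ : (-A - A*(((n:ℝ)-3)/(n:ℝ)))*((n:ℝ)+5) -
        (-A + ((n:ℝ)+5)/(400000*(n:ℝ)^2))*(2*(n:ℝ)+8) =
        (A*((n:ℝ)+15)*(400000*(n:ℝ)) - ((n:ℝ)+5)*(2*(n:ℝ)+8)) / (400000*(n:ℝ)^2) := by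
      field_simp
      ring
    rw [hQ]
    apply div_pos ?_ (by positivity)
    nlinarith [mul_nonneg (mul_nonneg (sub_nonneg.mpr hA)
      (by linarith : (0:ℝ) ≤ (n:ℝ)+15)) hnpos.le]
  refine ⟨?_, key⟩
  intro p q s q' w hp hq hs hq' hw
  have hsumP : ∑ j, p j ≤ ((n:ℝ) + 4) * (1/φ) := by
    calc ∑ j, p j ≤ ∑ _j : Fin (n+4), (1/φ) :=
          Finset.sum_le_sum (fun j _ => (hp j).2)
      _ = ((n:ℝ) + 4) * (1/φ) := by
          rw [Finset.sum_const, Finset.card_univ, Fintype.card_fin, nsmul_eq_mul]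
          push_cast; ring
  have hsumS : 0 ≤ ∑ j, s j := Finset.sum_nonneg (fun j _ => (hs j).1)
  have h1 : (q + ∑ j, p j) / ((n:ℝ) + 5) ≤ (-A + ((n:ℝ)+5)/φ) / ((n:ℝ) + 5) := by
    gcongr ?_ / _
    have hsplit : ((n:ℝ)+5)/φ = 1/φ + ((n:ℝ)+4)*(1/φ) := by ring
    have hq2 := hq.2
    linarith
  have h2 : (-A - r ^ (2*i-1)) / (2 * (n:ℝ) + 8) ≤
      (q' + w + ∑ j, s j) / (2 * (n:ℝ) + 8) := by
    gcongr ?_ / _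
    have := hq'.1
    have := hw.1
    linarith
  exact lt_of_le_of_lt h1 (lt_of_lt_of_le key h2)
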